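/- Let ψ : ℕ → (0,∞) satisfy ψ(q) ≤ 1/q² for all q, and set φ(q) = 1/(q²ψ(q)). An irrational x ∈ [0,1] with partial quotients ω_n and convergent denominators q_n is ψ-well approximable (i.e., for every ε > 0 there are infinitely many rationals p/q with |x − p/q| ≤ εψ(q)) if and only if for every K > 0 there exist infinitely many n with ω_n ≥ K φ(q_n). -/

import Mathlib

open Real Set

/-- The Gauss map. -/
noncomputable def gaussMap (x : ℝ) : ℝ := if x = 0 then 0 else 1 / x - ⌊1 / x⌋

/-- The n-th partial quotient of x. -/
noncomputable def cfOmega (x : ℝ) (n : ℕ) : ℕ := (⌊1 / (gaussMap^[n] x)⌋).toNat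

/-- (q_{n-1}, q_n) for the convergent denominators of x, with q_{-1} = 0, q_0 = 1. -/
noncomputable def cfQPair (x : ℝ) : ℕ → ℕ × ℕ
  | 0 => (0, 1)
  | n + 1 => ((cfQPair x n).2, cfOmega x n * (cfQPair x n).2 + (cfQPair x n).1)

/-- The denominator q_n of the n-th convergent of x. -/
noncomputable def cfQ (x : ℝ) (n : ℕ) : ℕ := (cfQPair x n).2

/-- (p_{n-1}, p_n) for the convergent numerators of x, with p_{-1} = 1, p_0 = 0. -/
noncomputable def cfPPair (x : ℝ) : ℕ → ℕ × ℕ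
  | 0 => (1, 0)
  | n + 1 => ((cfPPair x n).2, cfOmega x n * (cfPPair x n).2 + (cfPPair x n).1)

/-- The numerator p_n of the n-th convergent of x. -/
noncomputable def cfP (x : ℝ) (n : ℕ) : ℕ := (cfPPair x n).2

lemma gauss_step {t : ℝ} (hirr : Irrational t) (ht : t ∈ Ioo (0:ℝ) 1) :
    Irrational (gaussMap t) ∧ gaussMap t ∈ Ioo (0:ℝ) 1 := by
  have ht0 : t ≠ 0 := ne_of_gt ht.1
  have h1 : gaussMap t = Int.fract (1/t) := by
    rw [gaussMap, if_neg ht0, Int.fract]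
  have hinv : Irrational (1/t) := by simpa [one_div] using hirr.inv
  have hfi : Irrational (Int.fract (1/t)) := by
    rw [Int.fract]; exact hinv.sub_intCast _
  refine ⟨h1 ▸ hfi, h1 ▸ ⟨?_, Int.fract_lt_one _⟩⟩
  exact (Int.fract_nonneg (1/t)).lt_of_ne (Ne.symm hfi.ne_zero)

lemma gauss_iter {x : ℝ} (hirr : Irrational x) (hx : x ∈ Ioo (0:ℝ) 1) (n : ℕ) :
    Irrational (gaussMap^[n] x) ∧ gaussMap^[n] x ∈ Ioo (0:ℝ) 1 := by
  induction n with
  | zero => exact ⟨hirr, hx⟩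
  | succ n ih =>
    rw [Function.iterate_succ_apply']
    exact gauss_step ih.1 ih.2

lemma floor_inv_iter {x : ℝ} (hirr : Irrational x) (hx : x ∈ Ioo (0:ℝ) 1) (n : ℕ) :
    1 ≤ ⌊1 / (gaussMap^[n] x)⌋ := by
  obtain ⟨hi, h0, h1⟩ := gauss_iter hirr hx n
  have : (1:ℝ) ≤ 1 / (gaussMap^[n] x) := by
    rw [le_div_iff₀ h0, one_mul]
    exact le_of_lt h1
  exact Int.le_floor.mpr (by exact_mod_cast this)

lemma cfOmega_one_le {x : ℝ} (hirr : Irrational x) (hx : x ∈ Ioo (0:ℝ) 1) (n : ℕ) :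
    1 ≤ cfOmega x n := by
  have := floor_inv_iter hirr hx n
  unfold cfOmega
  omega

lemma cfOmega_cast {x : ℝ} (hirr : Irrational x) (hx : x ∈ Ioo (0:ℝ) 1) (n : ℕ) :
    ((cfOmega x n : ℝ)) = (⌊1 / (gaussMap^[n] x)⌋ : ℝ) := by
  have := floor_inv_iter hirr hx n
  unfold cfOmega
  have h2 : ((⌊1 / (gaussMap^[n] x)⌋.toNat : ℤ)) = ⌊1 / (gaussMap^[n] x)⌋ :=
    Int.toNat_of_nonneg (by omega)
  exact_mod_cast congrArg (fun z : ℤ => (z : ℝ)) h2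

lemma one_div_iter {x : ℝ} (hirr : Irrational x) (hx : x ∈ Ioo (0:ℝ) 1) (n : ℕ) :
    1 / (gaussMap^[n] x) = (cfOmega x n : ℝ) + gaussMap^[n+1] x := by
  obtain ⟨hi, h0, h1⟩ := gauss_iter hirr hx n
  rw [Function.iterate_succ_apply', gaussMap, if_neg (ne_of_gt h0),
    cfOmega_cast hirr hx n]
  ring

lemma cfQPair_fst (x : ℝ) (n : ℕ) : (cfQPair x (n+1)).1 = cfQ x n := rfl

lemma cfQ_bounds {x : ℝ} (hirr : Irrational x) (hx : x ∈ Ioo (0:ℝ) 1) (n : ℕ) :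
    1 ≤ (cfQPair x n).2 ∧ (cfQPair x n).1 ≤ (cfQPair x n).2 := by
  induction n with
  | zero => simp [cfQPair]
  | succ n ih =>
    have hω := cfOmega_one_le hirr hx n
    constructor
    · show 1 ≤ cfOmega x n * (cfQPair x n).2 + (cfQPair x n).1
      nlinarith [ih.1]
    · show (cfQPair x n).2 ≤ cfOmega x n * (cfQPair x n).2 + (cfQPair x n).1
      nlinarith [ih.1]

lemma cfQ_pos {x : ℝ} (hirr : Irrational x) (hx : x ∈ Ioo (0:ℝ) 1) (n : ℕ) :
    1 ≤ cfQ x n := (cfQ_bounds hirr hx n).1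

lemma cf_det (x : ℝ) (n : ℕ) :
    ((cfPPair x n).1 : ℤ) * (cfQPair x n).2 - (cfPPair x n).2 * (cfQPair x n).1 = (-1)^n := by
  induction n with
  | zero => simp [cfPPair, cfQPair]
  | succ n ih =>
    show ((cfPPair x n).2 : ℤ) * (cfOmega x n * (cfQPair x n).2 + (cfQPair x n).1)
        - (cfOmega x n * (cfPPair x n).2 + (cfPPair x n).1) * (cfQPair x n).2 = (-1)^(n+1)
    push_cast
    push_cast at ih
    ring_nf
    ring_nf at ih
    linarith [ih]

lemma cf_coprime (x : ℝ) (n : ℕ) : Nat.Coprime (cfP x n) (cfQ x n) := by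
  have h := cf_det x n
  have hg : ((Nat.gcd (cfP x n) (cfQ x n) : ℤ)) ∣ (-1:ℤ)^n := by
    rw [← h]
    exact dvd_sub (Dvd.dvd.mul_left (Int.natCast_dvd_natCast.mpr (Nat.gcd_dvd_right _ _)) _)
      (Dvd.dvd.mul_right (Int.natCast_dvd_natCast.mpr (Nat.gcd_dvd_left _ _)) _)
  have h2 : ((-1:ℤ)^n) * ((-1:ℤ)^n) = 1 := by
    rw [← pow_add]; exact Even.neg_one_pow ⟨n, rfl⟩
  have h1 : ((Nat.gcd (cfP x n) (cfQ x n) : ℤ)) ∣ 1 := h2 ▸ hg.mul_right _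
  exact Nat.dvd_one.mp (by exact_mod_cast h1)

lemma cfOmega_shift (x : ℝ) (n : ℕ) : cfOmega x (n+1) = cfOmega (gaussMap x) n := by
  simp [cfOmega, Function.iterate_succ_apply]

lemma cfPPair_shift (x : ℝ) (n : ℕ) : cfPPair x (n+1) = cfQPair (gaussMap x) n := by
  induction n with
  | zero => simp [cfPPair, cfQPair]
  | succ n ih =>
    show ((cfPPair x (n+1)).2, cfOmega x (n+1) * (cfPPair x (n+1)).2 + (cfPPair x (n+1)).1)
      = ((cfQPair (gaussMap x) n).2, cfOmega (gaussMap x) n * (cfQPair (gaussMap x) n).2 + (cfQPair (gaussMap x) n).1)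
    rw [ih, cfOmega_shift]

lemma cfQPair_shift (x : ℝ) (n : ℕ) :
    cfQPair x (n+1) = (cfOmega x 0 * (cfQPair (gaussMap x) n).1 + (cfPPair (gaussMap x) n).1,
      cfOmega x 0 * (cfQPair (gaussMap x) n).2 + (cfPPair (gaussMap x) n).2) := by
  induction n with
  | zero => simp [cfQPair, cfPPair, cfOmega]
  | succ n ih =>
    show ((cfQPair x (n+1)).2, cfOmega x (n+1) * (cfQPair x (n+1)).2 + (cfQPair x (n+1)).1)
      = _
    rw [ih, cfOmega_shift]
    show (cfOmega x 0 * (cfQPair (gaussMap x) n).2 + (cfPPair (gaussMap x) n).2,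
        cfOmega (gaussMap x) n * (cfOmega x 0 * (cfQPair (gaussMap x) n).2 + (cfPPair (gaussMap x) n).2)
          + (cfOmega x 0 * (cfQPair (gaussMap x) n).1 + (cfPPair (gaussMap x) n).1)) = _
    show _ = (cfOmega x 0 * (cfQPair (gaussMap x) (n+1)).1 + (cfPPair (gaussMap x) (n+1)).1,
        cfOmega x 0 * (cfOmega (gaussMap x) n * (cfQPair (gaussMap x) n).2 + (cfQPair (gaussMap x) n).1)
          + (cfOmega (gaussMap x) n * (cfPPair (gaussMap x) n).2 + (cfPPair (gaussMap x) n).1))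
    have h1 : (cfQPair (gaussMap x) (n+1)).1 = (cfQPair (gaussMap x) n).2 := rfl
    have h2 : (cfPPair (gaussMap x) (n+1)).1 = (cfPPair (gaussMap x) n).2 := rfl
    rw [h1, h2]
    refine Prod.ext rfl ?_
    show cfOmega (gaussMap x) n * (cfOmega x 0 * (cfQPair (gaussMap x) n).2 + (cfPPair (gaussMap x) n).2)
          + (cfOmega x 0 * (cfQPair (gaussMap x) n).1 + (cfPPair (gaussMap x) n).1) = _
    ring

lemma key_id {x : ℝ} (hirr : Irrational x) (hx : x ∈ Ioo (0:ℝ) 1) (n : ℕ) :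
    x * ((cfQPair x n).2 + (cfQPair x n).1 * gaussMap^[n] x)
      = (cfPPair x n).2 + (cfPPair x n).1 * gaussMap^[n] x := by
  induction n with
  | zero => simp [cfQPair, cfPPair]
  | succ n ih =>
    obtain ⟨hi, h0, h1⟩ := gauss_iter hirr hx n
    have hrec : gaussMap^[n] x * ((cfOmega x n : ℝ) + gaussMap^[n+1] x) = 1 := by
      rw [← one_div_iter hirr hx n]
      field_simp
    show x * ((((cfOmega x n * (cfQPair x n).2 + (cfQPair x n).1 : ℕ)) : ℝ)
        + ((cfQPair x n).2 : ℝ) * gaussMap^[n+1] x)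
      = (((cfOmega x n * (cfPPair x n).2 + (cfPPair x n).1 : ℕ)) : ℝ)
        + ((cfPPair x n).2 : ℝ) * gaussMap^[n+1] x
    push_cast
    linear_combination ((cfOmega x n : ℝ) + gaussMap^[n+1] x) * ih
      + (((cfPPair x n).1 : ℝ) - x * ((cfQPair x n).1 : ℝ)) * hrec

lemma dist_eq {x : ℝ} (hirr : Irrational x) (hx : x ∈ Ioo (0:ℝ) 1) (n : ℕ) :
    |x - (cfP x n : ℝ) / (cfQ x n : ℝ)|
      = gaussMap^[n] x / ((cfQ x n : ℝ) * ((cfQ x n : ℝ) + ((cfQPair x n).1 : ℝ) * gaussMap^[n] x)) := by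
  obtain ⟨hi, h0, h1⟩ := gauss_iter hirr hx n
  have hkey := key_id hirr hx n
  have hdet : (((cfPPair x n).1 : ℝ)) * ((cfQPair x n).2 : ℝ)
      - ((cfPPair x n).2 : ℝ) * ((cfQPair x n).1 : ℝ) = (-1:ℝ)^n := by
    exact_mod_cast congrArg (fun z : ℤ => (z : ℝ)) (cf_det x n)
  have hQ2 : (1:ℝ) ≤ ((cfQPair x n).2 : ℝ) := by exact_mod_cast (cfQ_bounds hirr hx n).1
  have hQ1 : (0:ℝ) ≤ ((cfQPair x n).1 : ℝ) := by positivity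
  have hQ2pos : (0:ℝ) < ((cfQPair x n).2 : ℝ) := by linarith
  have hD : (0:ℝ) < ((cfQPair x n).2 : ℝ) + ((cfQPair x n).1 : ℝ) * gaussMap^[n] x := by
    nlinarith
  have heq : x - ((cfPPair x n).2 : ℝ) / ((cfQPair x n).2 : ℝ)
      = ((-1:ℝ)^n * gaussMap^[n] x)
        / (((cfQPair x n).2 : ℝ) * (((cfQPair x n).2 : ℝ) + ((cfQPair x n).1 : ℝ) * gaussMap^[n] x)) := by
    rw [eq_div_iff (by positivity)]
    have hstep : (x - ((cfPPair x n).2 : ℝ) / ((cfQPair x n).2 : ℝ)) * ((cfQPair x n).2 : ℝ)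
        = x * ((cfQPair x n).2 : ℝ) - ((cfPPair x n).2 : ℝ) := by
      field_simp
    calc (x - ((cfPPair x n).2 : ℝ) / ((cfQPair x n).2 : ℝ)) * (((cfQPair x n).2 : ℝ) * (((cfQPair x n).2 : ℝ) + ((cfQPair x n).1 : ℝ) * gaussMap^[n] x))
        = ((x - ((cfPPair x n).2 : ℝ) / ((cfQPair x n).2 : ℝ)) * ((cfQPair x n).2 : ℝ)) * (((cfQPair x n).2 : ℝ) + ((cfQPair x n).1 : ℝ) * gaussMap^[n] x) := by ring
      _ = (x * ((cfQPair x n).2 : ℝ) - ((cfPPair x n).2 : ℝ)) * (((cfQPair x n).2 : ℝ) + ((cfQPair x n).1 : ℝ) * gaussMap^[n] x) := by rw [hstep]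
      _ = ((cfQPair x n).2 : ℝ) * (x * (((cfQPair x n).2 : ℝ) + ((cfQPair x n).1 : ℝ) * gaussMap^[n] x)) - ((cfPPair x n).2 : ℝ) * (((cfQPair x n).2 : ℝ) + ((cfQPair x n).1 : ℝ) * gaussMap^[n] x) := by ring
      _ = ((cfQPair x n).2 : ℝ) * (((cfPPair x n).2 : ℝ) + ((cfPPair x n).1 : ℝ) * gaussMap^[n] x) - ((cfPPair x n).2 : ℝ) * (((cfQPair x n).2 : ℝ) + ((cfQPair x n).1 : ℝ) * gaussMap^[n] x) := by rw [hkey]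
      _ = (((cfPPair x n).1 : ℝ) * ((cfQPair x n).2 : ℝ) - ((cfPPair x n).2 : ℝ) * ((cfQPair x n).1 : ℝ)) * gaussMap^[n] x := by ring
      _ = (-1:ℝ)^n * gaussMap^[n] x := by rw [hdet]
  show |x - ((cfPPair x n).2 : ℝ) / ((cfQPair x n).2 : ℝ)| = _
  rw [heq, abs_div, abs_mul, abs_pow, abs_neg, abs_one, one_pow, one_mul,
    abs_of_pos h0, abs_of_pos (by positivity : (0:ℝ) < ((cfQPair x n).2 : ℝ) * (((cfQPair x n).2 : ℝ) + ((cfQPair x n).1 : ℝ) * gaussMap^[n] x))]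
  rfl

lemma dist_upper {x : ℝ} (hirr : Irrational x) (hx : x ∈ Ioo (0:ℝ) 1) (n : ℕ) :
    |x - (cfP x n : ℝ) / (cfQ x n : ℝ)| ≤ 1 / ((cfOmega x n : ℝ) * (cfQ x n : ℝ)^2) := by
  obtain ⟨hi, h0, h1⟩ := gauss_iter hirr hx n
  obtain ⟨hi', h0', h1'⟩ := gauss_iter hirr hx (n+1)
  have hrec : gaussMap^[n] x * ((cfOmega x n : ℝ) + gaussMap^[n+1] x) = 1 := by
    rw [← one_div_iter hirr hx n]; field_simp
  have hω : (1:ℝ) ≤ (cfOmega x n : ℝ) := by exact_mod_cast cfOmega_one_le hirr hx n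
  have hQ2 : (1:ℝ) ≤ (cfQ x n : ℝ) := by exact_mod_cast cfQ_pos hirr hx n
  have hQ1 : (0:ℝ) ≤ ((cfQPair x n).1 : ℝ) := by positivity
  have hQpos : (0:ℝ) < (cfQ x n : ℝ) := lt_of_lt_of_le one_pos hQ2
  have hDpos : (0:ℝ) < (cfQ x n : ℝ) + ((cfQPair x n).1 : ℝ) * gaussMap^[n] x := by
    nlinarith [mul_nonneg hQ1 h0.le]
  rw [dist_eq hirr hx n, div_le_div_iff₀ (mul_pos hQpos hDpos) (by positivity)]
  have htω : gaussMap^[n] x * (cfOmega x n : ℝ) ≤ 1 := by nlinarith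
  nlinarith [mul_le_mul_of_nonneg_right htω (by positivity : (0:ℝ) ≤ (cfQ x n : ℝ)^2),
    mul_nonneg (mul_nonneg (by positivity : (0:ℝ) ≤ (cfQ x n : ℝ)) hQ1) h0.le]

lemma dist_lower {x : ℝ} (hirr : Irrational x) (hx : x ∈ Ioo (0:ℝ) 1) (n : ℕ) :
    1 / (2 * ((cfOmega x n : ℝ) + 1) * (cfQ x n : ℝ)^2) < |x - (cfP x n : ℝ) / (cfQ x n : ℝ)| := by
  obtain ⟨hi, h0, h1⟩ := gauss_iter hirr hx n
  obtain ⟨hi', h0', h1'⟩ := gauss_iter hirr hx (n+1)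
  have hrec : gaussMap^[n] x * ((cfOmega x n : ℝ) + gaussMap^[n+1] x) = 1 := by
    rw [← one_div_iter hirr hx n]; field_simp
  have hω : (1:ℝ) ≤ (cfOmega x n : ℝ) := by exact_mod_cast cfOmega_one_le hirr hx n
  have hQ2 : (1:ℝ) ≤ (cfQ x n : ℝ) := by exact_mod_cast cfQ_pos hirr hx n
  have hQ1 : (0:ℝ) ≤ ((cfQPair x n).1 : ℝ) := by positivity
  have hQ12 : ((cfQPair x n).1 : ℝ) ≤ (cfQ x n : ℝ) := by
    exact_mod_cast (cfQ_bounds hirr hx n).2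
  have hQ2pos : (0:ℝ) < (cfQ x n : ℝ) := by linarith
  have hDpos : (0:ℝ) < (cfQ x n : ℝ) + ((cfQPair x n).1 : ℝ) * gaussMap^[n] x := by
    nlinarith [mul_nonneg hQ1 h0.le]
  rw [dist_eq hirr hx n, div_lt_div_iff₀ (by positivity) (mul_pos hQ2pos hDpos)]
  have h1t : (1:ℝ) < gaussMap^[n] x * ((cfOmega x n : ℝ) + 1) := by nlinarith
  have h2t : ((cfQPair x n).1 : ℝ) * gaussMap^[n] x < (cfQ x n : ℝ) := by nlinarith
  nlinarith [mul_lt_mul_of_pos_left h2t hQ2pos,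
    mul_lt_mul_of_pos_right h1t (by positivity : (0:ℝ) < 2 * (cfQ x n : ℝ)^2)]

lemma floor_eq_zero_of_mem {x : ℝ} (hx : x ∈ Ioo (0:ℝ) 1) : ⌊x⌋ = 0 :=
  Int.floor_eq_zero_iff.mpr ⟨hx.1.le, hx.2⟩

lemma fract_eq_self_of_mem {x : ℝ} (hx : x ∈ Ioo (0:ℝ) 1) : Int.fract x = x := by
  rw [Int.fract, floor_eq_zero_of_mem hx]; simp

lemma convergent_inv {x : ℝ} (hirr : Irrational x) (hx : x ∈ Ioo (0:ℝ) 1) (n : ℕ) :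
    Real.convergent x⁻¹ n = (cfOmega x 0 : ℚ) + Real.convergent (gaussMap x) n := by
  have hfloor : ⌊x⁻¹⌋ = (cfOmega x 0 : ℤ) := by
    have h := floor_inv_iter hirr hx 0
    simp only [Function.iterate_zero_apply, one_div] at h
    simp only [cfOmega, Function.iterate_zero_apply, one_div]
    omega
  have hfract : Int.fract x⁻¹ = gaussMap x := by
    rw [Int.fract, gaussMap, if_neg (ne_of_gt hx.1), one_div]
  cases n with
  | zero =>
    have hg := gauss_step hirr hx
    rw [Real.convergent_zero, Real.convergent_zero, floor_eq_zero_of_mem hg.2, hfloor]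
    push_cast; ring
  | succ n =>
    have hg := gauss_step hirr hx
    rw [Real.convergent_succ, Real.convergent_succ, hfract, hfloor,
      floor_eq_zero_of_mem hg.2, fract_eq_self_of_mem hg.2]
    push_cast; ring

lemma convergent_eq (n : ℕ) : ∀ x : ℝ, Irrational x → x ∈ Ioo (0:ℝ) 1 →
    Real.convergent x n = (cfP x n : ℚ) / (cfQ x n : ℚ) := by
  induction n with
  | zero =>
    intro x hirr hx
    rw [Real.convergent_zero, floor_eq_zero_of_mem hx]
    simp [cfP, cfQ, cfPPair, cfQPair]
  | succ n ih =>
    intro x hirr hx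
    have hg := gauss_step hirr hx
    have hQ' : (0:ℚ) < (cfQ (gaussMap x) n : ℚ) := by
      exact_mod_cast cfQ_pos hg.1 hg.2 n
    have hω : (1:ℚ) ≤ (cfOmega x 0 : ℚ) := by exact_mod_cast cfOmega_one_le hirr hx 0
    rw [Real.convergent_succ, floor_eq_zero_of_mem hx, fract_eq_self_of_mem hx,
      convergent_inv hirr hx n, ih (gaussMap x) hg.1 hg.2]
    have hden : (0:ℚ) < (cfOmega x 0 : ℚ) * (cfQ (gaussMap x) n : ℚ) + (cfP (gaussMap x) n : ℚ) := by
      have : (0:ℚ) ≤ (cfP (gaussMap x) n : ℚ) := by positivity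
      nlinarith
    have hP1 : cfP x (n+1) = cfQ (gaussMap x) n := by
      show (cfPPair x (n+1)).2 = (cfQPair (gaussMap x) n).2
      rw [cfPPair_shift]
    have hQ1 : cfQ x (n+1) = cfOmega x 0 * cfQ (gaussMap x) n + cfP (gaussMap x) n := by
      show (cfQPair x (n+1)).2 = _
      rw [cfQPair_shift]
      rfl
    rw [hP1, hQ1]
    push_cast
    rw [eq_comm, div_eq_iff (ne_of_gt hden)]
    field_simp
    ring

lemma cf_den {x : ℝ} (hirr : Irrational x) (hx : x ∈ Ioo (0:ℝ) 1) (n : ℕ) :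
    ((cfP x n : ℚ) / (cfQ x n : ℚ)).den = cfQ x n := by
  have hq : 0 < cfQ x n := cfQ_pos hirr hx n
  have h := Rat.den_div_eq_of_coprime (a := (cfP x n : ℤ)) (b := (cfQ x n : ℤ))
    (by exact_mod_cast hq) (by simpa using cf_coprime x n)
  have h2 : (((cfP x n : ℤ) : ℚ) / ((cfQ x n : ℤ) : ℚ)).den = cfQ x n := by exact_mod_cast h
  simpa using h2

lemma cfQ_lt_succ {x : ℝ} (hirr : Irrational x) (hx : x ∈ Ioo (0:ℝ) 1) {n : ℕ} (hn : 1 ≤ n) :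
    cfQ x n < cfQ x (n+1) := by
  obtain ⟨m, rfl⟩ : ∃ m, n = m + 1 := ⟨n-1, by omega⟩
  have hq1 : 1 ≤ (cfQPair x (m+1)).1 := by rw [cfQPair_fst]; exact cfQ_pos hirr hx m
  have hω := cfOmega_one_le hirr hx (m+1)
  have hq2 := cfQ_pos hirr hx (m+1)
  show (cfQPair x (m+1)).2 < cfOmega x (m+1) * (cfQPair x (m+1)).2 + (cfQPair x (m+1)).1
  nlinarith

lemma cfQ_mono {x : ℝ} (hirr : Irrational x) (hx : x ∈ Ioo (0:ℝ) 1) :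
    ∀ n m : ℕ, 1 ≤ m → m < n → cfQ x m < cfQ x n := by
  intro n
  induction n with
  | zero => omega
  | succ n ih =>
    intro m hm hlt
    rcases Nat.lt_succ_iff_lt_or_eq.mp hlt with h | h
    · exact lt_trans (ih m hm h) (cfQ_lt_succ hirr hx (by omega))
    · subst h; exact cfQ_lt_succ hirr hx hm

theorem stmt4 (x : ℝ) (hx : x ∈ Icc (0:ℝ) 1) (hirr : Irrational x)
    (ψ : ℕ → ℝ) (hψpos : ∀ q : ℕ, 1 ≤ q → 0 < ψ q)
    (hψle : ∀ q : ℕ, 1 ≤ q → ψ q ≤ 1 / (q : ℝ) ^ 2) :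
    (∀ ε : ℝ, 0 < ε → {r : ℚ | |x - (r : ℝ)| ≤ ε * ψ r.den}.Infinite) ↔
      (∀ K : ℝ, 0 < K →
        {n : ℕ | K * (1 / ((cfQ x n : ℝ) ^ 2 * ψ (cfQ x n))) ≤ (cfOmega x n : ℝ)}.Infinite) := by
  have h0 : x ≠ 0 := fun h => (h ▸ hirr) ⟨0, by norm_num⟩
  have h1 : x ≠ 1 := fun h => (h ▸ hirr) ⟨1, by norm_num⟩
  have hx' : x ∈ Ioo (0:ℝ) 1 := ⟨hx.1.lt_of_ne (Ne.symm h0), hx.2.lt_of_ne h1⟩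
  constructor
  · -- well approximable → large partial quotients
    intro H K hK
    have hεpos : (0:ℝ) < 1/(2*(K+1)) := by positivity
    have hS := H (1/(2*(K+1))) hεpos
    set S := {r : ℚ | |x - (r : ℝ)| ≤ 1/(2*(K+1)) * ψ r.den} with hSdef
    have hmap : ∀ r ∈ S, ∃ n, r = Real.convergent x n := by
      intro r hr
      apply Real.exists_rat_eq_convergent
      have hden1 : 1 ≤ r.den := r.den_pos
      have hdpos : (0:ℝ) < (r.den : ℝ) := by exact_mod_cast r.den_pos
      have hψd := hψle r.den hden1
      have hψp := hψpos r.den hden1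
      calc |x - (r:ℝ)| ≤ 1/(2*(K+1)) * ψ r.den := hr
        _ ≤ 1/(2*(K+1)) * (1/(r.den:ℝ)^2) := by
            exact mul_le_mul_of_nonneg_left hψd hεpos.le
        _ < 1/(2*(r.den:ℝ)^2) := by
            rw [one_div_mul_one_div]
            apply one_div_lt_one_div_of_lt (by positivity)
            have hd2 : (0:ℝ) < (r.den:ℝ)^2 := by positivity
            nlinarith
    choose! f hf using hmap
    have hinj : Set.InjOn f S := by
      intro r1 hr1 r2 hr2 he
      rw [hf r1 hr1, hf r2 hr2, he]
    refine Set.Infinite.mono ?_ (hS.image hinj)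
    rintro n ⟨r, hr, rfl⟩
    have hreq : r = (cfP x (f r) : ℚ) / (cfQ x (f r) : ℚ) := by
      conv_lhs => rw [hf r hr]
      rw [convergent_eq _ x hirr hx']
    set n := f r
    have hq1 : 1 ≤ cfQ x n := cfQ_pos hirr hx' n
    have hqpos : (0:ℝ) < (cfQ x n : ℝ) := by exact_mod_cast hq1
    have hψp := hψpos _ hq1
    have hψd := hψle _ hq1
    have hA : (0:ℝ) < (cfQ x n : ℝ)^2 * ψ (cfQ x n) := by positivity
    have hA1 : (cfQ x n : ℝ)^2 * ψ (cfQ x n) ≤ 1 := by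
      have := mul_le_mul_of_nonneg_left hψd (by positivity : (0:ℝ) ≤ (cfQ x n : ℝ)^2)
      calc (cfQ x n : ℝ)^2 * ψ (cfQ x n) ≤ (cfQ x n : ℝ)^2 * (1/(cfQ x n : ℝ)^2) := this
        _ = 1 := by field_simp
    have hden : r.den = cfQ x n := by rw [hreq]; exact cf_den hirr hx' n
    have hrreal : (r : ℝ) = (cfP x n : ℝ) / (cfQ x n : ℝ) := by
      rw [hreq]; push_cast; ring
    have hω : (1:ℝ) ≤ (cfOmega x n : ℝ) := by exact_mod_cast cfOmega_one_le hirr hx' n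
    have hchain : 1 / (2 * ((cfOmega x n : ℝ) + 1) * (cfQ x n : ℝ)^2)
        < 1/(2*(K+1)) * ψ (cfQ x n) := by
      calc 1 / (2 * ((cfOmega x n : ℝ) + 1) * (cfQ x n : ℝ)^2)
          < |x - (cfP x n : ℝ) / (cfQ x n : ℝ)| := dist_lower hirr hx' n
        _ = |x - (r:ℝ)| := by rw [hrreal]
        _ ≤ 1/(2*(K+1)) * ψ r.den := hr
        _ = 1/(2*(K+1)) * ψ (cfQ x n) := by rw [hden]
    have hCpos : (0:ℝ) < 2 * ((cfOmega x n : ℝ) + 1) * (cfQ x n : ℝ)^2 := by positivity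
    have hpoly : 2*(K+1) < ψ (cfQ x n) * (2 * ((cfOmega x n : ℝ) + 1) * (cfQ x n : ℝ)^2) := by
      rw [div_lt_iff₀ hCpos] at hchain
      calc 2*(K+1) = (2*(K+1)) * 1 := by ring
        _ < (2*(K+1)) * (1/(2*(K+1)) * ψ (cfQ x n) * (2 * ((cfOmega x n : ℝ) + 1) * (cfQ x n : ℝ)^2)) :=
            mul_lt_mul_of_pos_left hchain (by linarith)
        _ = ψ (cfQ x n) * (2 * ((cfOmega x n : ℝ) + 1) * (cfQ x n : ℝ)^2) := by
            field_simp
    show K * (1 / ((cfQ x n : ℝ)^2 * ψ (cfQ x n))) ≤ (cfOmega x n : ℝ)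
    rw [mul_one_div, div_le_iff₀ hA]
    nlinarith [hpoly, hA1, hA]
  · -- large partial quotients → well approximable
    intro H ε hε
    have hT := H (1/ε) (by positivity)
    set T := {n : ℕ | 1/ε * (1 / ((cfQ x n : ℝ)^2 * ψ (cfQ x n))) ≤ (cfOmega x n : ℝ)} with hTdef
    have hT' : (T \ {0}).Infinite := hT.diff (Set.finite_singleton 0)
    set f : ℕ → ℚ := fun n => (cfP x n : ℚ) / (cfQ x n : ℚ) with hfdef
    have hinj : Set.InjOn f (T \ {0}) := by
      intro m hm n hn he
      have hdm : (f m).den = cfQ x m := cf_den hirr hx' m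
      have hdn : (f n).den = cfQ x n := cf_den hirr hx' n
      have hq : cfQ x m = cfQ x n := by rw [← hdm, ← hdn, he]
      have hm0 : m ≠ 0 := fun h => hm.2 (by simp [h])
      have hn0 : n ≠ 0 := fun h => hn.2 (by simp [h])
      rcases lt_trichotomy m n with h | h | h
      · exact absurd hq (Nat.ne_of_lt (cfQ_mono hirr hx' n m (Nat.one_le_iff_ne_zero.mpr hm0) h))
      · exact h
      · exact absurd hq.symm (Nat.ne_of_lt (cfQ_mono hirr hx' m n (Nat.one_le_iff_ne_zero.mpr hn0) h))
    refine Set.Infinite.mono ?_ (hT'.image hinj)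
    rintro r ⟨n, hn, rfl⟩
    have hq1 : 1 ≤ cfQ x n := cfQ_pos hirr hx' n
    have hqpos : (0:ℝ) < (cfQ x n : ℝ) := by exact_mod_cast hq1
    have hψp := hψpos _ hq1
    have hA : (0:ℝ) < (cfQ x n : ℝ)^2 * ψ (cfQ x n) := by positivity
    have hω : (1:ℝ) ≤ (cfOmega x n : ℝ) := by exact_mod_cast cfOmega_one_le hirr hx' n
    have hωpos : (0:ℝ) < (cfOmega x n : ℝ) := by linarith
    have hden : (f n).den = cfQ x n := cf_den hirr hx' n
    have hrreal : ((f n) : ℝ) = (cfP x n : ℝ) / (cfQ x n : ℝ) := by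
      rw [hfdef]; push_cast; ring
    show |x - ((f n):ℝ)| ≤ ε * ψ (f n).den
    rw [hrreal, hden]
    have hmem : 1/ε * (1 / ((cfQ x n : ℝ)^2 * ψ (cfQ x n))) ≤ (cfOmega x n : ℝ) := hn.1
    calc |x - (cfP x n : ℝ) / (cfQ x n : ℝ)|
        ≤ 1 / ((cfOmega x n : ℝ) * (cfQ x n : ℝ)^2) := dist_upper hirr hx' n
      _ ≤ ε * ψ (cfQ x n) := by
          rw [div_le_iff₀ (by positivity)]
          rw [mul_one_div, div_le_iff₀ hA] at hmem
          have h2 : 1 ≤ ε * ((cfOmega x n : ℝ) * ((cfQ x n : ℝ)^2 * ψ (cfQ x n))) := by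
            have := mul_le_mul_of_nonneg_left hmem hε.le
            calc (1:ℝ) = ε * (1/ε) := by field_simp
              _ ≤ ε * ((cfOmega x n : ℝ) * ((cfQ x n : ℝ)^2 * ψ (cfQ x n))) := this
          nlinarith [h2]
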